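/- A perfect path p in a monomial algebra Λ is elementary (a source in the Hasse quiver of (ℙ_Λ, ⪯)) if and only if p is a sink in the Hasse quiver of (ℙ_Λ, ≤); dually, p is co-elementary (a sink w.r.t. ⪯) if and only if p is a source in the Hasse quiver of (ℙ_Λ, ≤). -/

import Mathlib

/-! Combinatorial model of a monomial algebra `Λ = KQ/I`.

A finite quiver is given by source and target maps on a type of arrows.
A (nontrivial) path is encoded as a nonempty list of composable arrows;
the admissible monomial ideal `I` is encoded by its set `F` of minimal
generating paths, and a path is zero in `Λ` iff it contains a member of
`F` as a contiguous subpath (infix). -/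

/-- A quiver structure on arrow type `E` with vertex type `V`. -/
structure QuiverData (V E : Type) where
  src : E → V
  tgt : E → V

namespace QuiverData

variable {V E : Type} (Q : QuiverData V E)

/-- `l` is the list of arrows of a path of `Q`. -/
def IsPath (l : List E) : Prop := l.Chain' fun a b => Q.tgt a = Q.src b

/-- Two paths are composable: the target of the first equals the source of
the second (vacuously true if one of them is trivial). -/
def Composable (l m : List E) : Prop :=
  ∀ a ∈ l.getLast?, ∀ b ∈ m.head?, Q.tgt a = Q.src b

end QuiverData

/-- A monomial algebra, encoded combinatorially: a finite quiver together with
the set `F` of minimal paths generating the admissible monomial ideal `I`. -/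
structure MonomialData (V E : Type) extends QuiverData V E where
  F : Set (List E)
  F_path : ∀ f ∈ F, toQuiverData.IsPath f
  F_len : ∀ f ∈ F, 2 ≤ f.length
  F_min : ∀ f ∈ F, ∀ g, g <:+: f → (∃ f' ∈ F, f' <:+: g) → g = f
  admissible : ∃ N, ∀ l, toQuiverData.IsPath l → N ≤ l.length → ∃ f ∈ F, f <:+: l

namespace MonomialData

variable {V E : Type} (M : MonomialData V E)

/-- The path `l` is zero in `Λ`. -/
def IsZero (l : List E) : Prop := ∃ f ∈ M.F, f <:+: l

/-- `l` is a path which is nonzero in `Λ`. -/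
def Nonzero (l : List E) : Prop := M.toQuiverData.IsPath l ∧ ¬ M.IsZero l

/-- A perfect pair of nonzero nontrivial paths, after Chen–Shen–Zhou. -/
def PerfectPair (p q : List E) : Prop :=
  p ≠ [] ∧ q ≠ [] ∧ M.Nonzero p ∧ M.Nonzero q ∧
  M.toQuiverData.Composable p q ∧ M.IsZero (p ++ q) ∧
  (∀ q', q' ≠ [] → M.Nonzero q' → M.toQuiverData.Composable p q' →
      M.IsZero (p ++ q') → q <+: q') ∧
  (∀ p', p' ≠ [] → M.Nonzero p' → M.toQuiverData.Composable p' q →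
      M.IsZero (p' ++ q) → p <:+ p')

/-- A perfect path: a path appearing in a perfect path sequence
`(p₁, …, pₙ, pₙ₊₁ = p₁)`, encoded by a periodic sequence of paths each of
whose consecutive pairs is perfect. -/
def IsPerfect (p : List E) : Prop :=
  ∃ (n : ℕ) (s : ℕ → List E), 0 < n ∧ s 0 = p ∧ (∀ i, s (i + n) = s i) ∧
    ∀ i, M.PerfectPair (s i) (s (i + 1))

/-- `c` is the underlying cycle associated with the perfect path `p`:
the shortest cycle `c` with `p₁ ⋯ pₙ = cˡ` for some `l > 0`, for a perfect
path sequence through `p`. -/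
def IsUnderlyingCycleOf (c p : List E) : Prop :=
  ∃ (n : ℕ) (s : ℕ → List E), 0 < n ∧ s 0 = p ∧ (∀ i, s (i + n) = s i) ∧
    (∀ i, M.PerfectPair (s i) (s (i + 1))) ∧
    (∃ l, 0 < l ∧ ((List.range n).map s).flatten = (List.replicate l c).flatten) ∧
    (∀ c' l', 0 < l' → ((List.range n).map s).flatten = (List.replicate l' c').flatten →
      c.length ≤ c'.length)


/-- There is an overlap between the perfect paths `p` and `q` (`p` overlaps `q`). -/
def Overlap (p q : List E) : Prop :=
  ∃ x p' q' : List E, x ≠ [] ∧ p = p' ++ x ∧ q = x ++ q' ∧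
    M.Nonzero (p' ++ x ++ q') ∧ (p = q → p' ≠ [] ∧ q' ≠ [])

/-- An elementary perfect path: a source in the Hasse quiver of the left
divisibility order `⪯` on perfect paths, i.e. it is not a proper left divisor
of any perfect path. -/
def Elementary (p : List E) : Prop :=
  M.IsPerfect p ∧ ¬ ∃ q, M.IsPerfect q ∧ p <+: q ∧ p ≠ q

/-- A co-elementary perfect path: a sink in the Hasse quiver of `⪯`, i.e.
no proper left divisor of it is perfect. -/
def CoElementary (p : List E) : Prop :=
  M.IsPerfect p ∧ ¬ ∃ q, M.IsPerfect q ∧ q <+: p ∧ q ≠ p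

/-- There is an arrow `q ⟶ p` in the Hasse quiver of `(ℙ_Λ, ⪯)`:
`p ≺ q` and no perfect path lies strictly between them. -/
def HasseArrowPrec (q p : List E) : Prop :=
  M.IsPerfect p ∧ M.IsPerfect q ∧ p <+: q ∧ p ≠ q ∧
    ¬ ∃ r, M.IsPerfect r ∧ p <+: r ∧ p ≠ r ∧ r <+: q ∧ r ≠ q

end MonomialData

/-- Two cycles are equivalent (agree up to cyclic permutation): each is a
subpath of a power of the other. -/
def CyclesEquiv {E : Type} (c d : List E) : Prop :=
  ∃ m k, 0 < m ∧ 0 < k ∧ c <:+: (List.replicate m d).flatten ∧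
    d <:+: (List.replicate k c).flatten



namespace PPAux
open List

theorem prefix_antisymm {α : Type*} {l₁ l₂ : List α} (h1 : l₁ <+: l₂) (h2 : l₂ <+: l₁) :
    l₁ = l₂ :=
  List.IsPrefix.eq_of_length h1 (le_antisymm h1.length_le h2.length_le)

theorem suffix_antisymm {α : Type*} {l₁ l₂ : List α} (h1 : l₁ <:+ l₂) (h2 : l₂ <:+ l₁) :
    l₁ = l₂ :=
  List.IsSuffix.eq_of_length h1 (le_antisymm h1.length_le h2.length_le)

theorem ne_of_prefix_proper {α : Type*} {l₁ l₂ u : List α} (h : l₂ = l₁ ++ u) (hu : u ≠ []) :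
    l₁ ≠ l₂ := by
  intro he; apply hu
  have : l₁ ++ u = l₁ ++ [] := by simpa [h] using he.symm
  exact (List.append_cancel_left this)

theorem ne_of_suffix_proper {α : Type*} {l₁ l₂ u : List α} (h : l₂ = u ++ l₁) (hu : u ≠ []) :
    l₁ ≠ l₂ := by
  intro he
  apply hu
  have hl : l₂.length = u.length + l₁.length := by simp [h]
  rw [← he] at hl
  have : u.length = 0 := by omega
  simpa using this

/-- Splitting an infix of an append. -/
theorem infix_append_split {α : Type*} {f a b : List α} (h : f <:+: a ++ b) :
    f <:+: a ∨ f <:+: b ∨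
      ∃ s y, f = s ++ y ∧ s ≠ [] ∧ y ≠ [] ∧ s <:+ a ∧ y <+: b := by
  obtain ⟨l, r, hlr⟩ := h
  by_cases h1 : l.length + f.length ≤ a.length
  · left
    have : f <+: a.drop l.length := by
      have hd : (a ++ b).drop l.length = a.drop l.length ++ b := by
        rw [List.drop_append, Nat.sub_eq_zero_of_le (by omega), List.drop_zero]
      have hd2 : (a ++ b).drop l.length = f ++ r := by
        rw [← hlr, List.append_assoc, List.drop_left]
      have : f ++ r = a.drop l.length ++ b := hd2 ▸ hd
      exact List.prefix_of_prefix_length_le ⟨r, this⟩ ⟨b, rfl⟩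
        (by have := List.length_drop (i := l.length) (l := a); omega)
    exact this.isInfix.trans (List.drop_suffix _ _).isInfix
  · by_cases h2 : a.length ≤ l.length
    · right; left
      have hd : (a ++ b).drop l.length = b.drop (l.length - a.length) := by
        rw [List.drop_append, List.drop_eq_nil_iff.2 h2, List.nil_append]
      have hd2 : (a ++ b).drop l.length = f ++ r := by
        rw [← hlr, List.append_assoc, List.drop_left]
      have hpf : f <+: b.drop (l.length - a.length) := ⟨r, by rw [← hd, hd2]⟩
      exact hpf.isInfix.trans (List.drop_suffix _ _).isInfix
    · right; right
      push_neg at h1 h2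
      set s := a.drop l.length with hs
      have hslen : s.length = a.length - l.length := List.length_drop
      have hd2 : f ++ r = s ++ b := by
        have : (a ++ b).drop l.length = s ++ b := by
          rw [List.drop_append, Nat.sub_eq_zero_of_le (le_of_lt h2),
            List.drop_zero]
        rw [← this, ← hlr, List.append_assoc, List.drop_left]
      have hsf : s <+: f := by
        refine List.prefix_of_prefix_length_le ⟨b, hd2.symm⟩ ⟨r, rfl⟩ (by omega)
      obtain ⟨y, hy⟩ := hsf
      have hflen : s.length < f.length := by omega
      refine ⟨s, y, hy.symm, ?_, ?_, List.drop_suffix _ _, ?_⟩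
      · rw [← List.length_pos_iff_ne_nil]; omega
      · intro hy0
        rw [hy0, List.append_nil] at hy
        rw [hy] at hflen; omega
      · have hyb : y ++ r = b := by
          have : s ++ (y ++ r) = s ++ b := by
            rw [← List.append_assoc, hy, hd2]
          exact List.append_cancel_left this
        exact ⟨r, hyb⟩

theorem head?_append_left {α : Type*} {l : List α} (m : List α) (h : l ≠ []) :
    (l ++ m).head? = l.head? := by
  cases l with
  | nil => exact absurd rfl h
  | cons a t => rfl

theorem per_mult {α : Type*} {s : ℕ → α} {n : ℕ} (h : ∀ i, s (i + n) = s i) :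
    ∀ k i, s (i + k * n) = s i := by
  intro k
  induction k with
  | zero => simp
  | succ k ih =>
    intro i
    rw [Nat.succ_mul, ← Nat.add_assoc, Nat.add_comm (i + k * n) n]
    rw [Nat.add_comm n (i + k*n)] ; rw [h (i + k * n)]
    exact ih i

end PPAux

namespace MonomialData
open List PPAux
variable {V E : Type} {M : MonomialData V E}

theorem PerfectPair.nel {p q : List E} (h : M.PerfectPair p q) : p ≠ [] := h.1
theorem PerfectPair.ner {p q : List E} (h : M.PerfectPair p q) : q ≠ [] := h.2.1
theorem PerfectPair.nzl {p q : List E} (h : M.PerfectPair p q) : M.Nonzero p := h.2.2.1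
theorem PerfectPair.nzr {p q : List E} (h : M.PerfectPair p q) : M.Nonzero q := h.2.2.2.1
theorem PerfectPair.comp {p q : List E} (h : M.PerfectPair p q) :
    M.toQuiverData.Composable p q := h.2.2.2.2.1
theorem PerfectPair.zero {p q : List E} (h : M.PerfectPair p q) :
    M.IsZero (p ++ q) := h.2.2.2.2.2.1
theorem PerfectPair.rmin {p q : List E} (h : M.PerfectPair p q) :
    ∀ q', q' ≠ [] → M.Nonzero q' → M.toQuiverData.Composable p q' →
    M.IsZero (p ++ q') → q <+: q' := h.2.2.2.2.2.2.1
theorem PerfectPair.lmin {p q : List E} (h : M.PerfectPair p q) :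
    ∀ p', p' ≠ [] → M.Nonzero p' → M.toQuiverData.Composable p' q →
    M.IsZero (p' ++ q) → p <:+ p' := h.2.2.2.2.2.2.2

theorem isZero_mono {l l' : List E} (h : l <:+: l') (hz : M.IsZero l) : M.IsZero l' := by
  obtain ⟨f, hf, hfl⟩ := hz; exact ⟨f, hf, hfl.trans h⟩

theorem nonzero_infix {l l' : List E} (h : M.Nonzero l') (hi : l <:+: l') : M.Nonzero l :=
  ⟨h.1.infix hi, fun hz => h.2 (isZero_mono hi hz)⟩

theorem nonzero_of_proper_infix_F {f g : List E} (hf : f ∈ M.F) (h : g <:+: f) (hne : g ≠ f) :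
    M.Nonzero g :=
  ⟨(M.F_path f hf).infix h, fun ⟨f', hf', hff⟩ => hne (M.F_min f hf g h ⟨f', hf', hff⟩)⟩

theorem composable_of_path_append {l m : List E} (h : M.toQuiverData.IsPath (l ++ m)) :
    M.toQuiverData.Composable l m := (List.isChain_append.1 h).2.2

theorem infix_append_of_suffix_prefix {s y a b : List E} (hs : s <:+ a) (hy : y <+: b) :
    s ++ y <:+: a ++ b := by
  obtain ⟨t, ht⟩ := hs; obtain ⟨w, hw⟩ := hy
  exact ⟨t, w, by rw [← ht, ← hw]; simp [List.append_assoc]⟩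

/-- The concatenation of a perfect pair is a relation. -/
theorem PerfectPair.append_mem_F {a b : List E} (h : M.PerfectPair a b) : a ++ b ∈ M.F := by
  obtain ⟨f, hfF, hfinf⟩ := h.zero
  rcases infix_append_split hfinf with hc | hc | ⟨s, y, hfsy, hs, hy, hsa, hyb⟩
  · exact absurd ⟨f, hfF, hc⟩ h.nzl.2
  · exact absurd ⟨f, hfF, hc⟩ h.nzr.2
  · have hfp : M.toQuiverData.IsPath f := M.F_path f hfF
    have hcompsy := composable_of_path_append (M := M) (hfsy ▸ hfp)
    have hynz : M.Nonzero y := nonzero_infix h.nzr hyb.isInfix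
    have hcay : M.toQuiverData.Composable a y := by
      intro x hx c hc
      refine hcompsy x ?_ c hc
      obtain ⟨t, ht⟩ := hsa
      rw [← ht] at hx; rwa [getLast?_append_of_ne_nil _ hs] at hx
    have hzay : M.IsZero (a ++ y) :=
      ⟨f, hfF, hfsy ▸ infix_append_of_suffix_prefix hsa prefix_rfl⟩
    have hyeq : y = b := prefix_antisymm hyb (h.rmin y hy hynz hcay hzay)
    subst hyeq
    have hsnef : s ≠ f := by
      intro hsf; rw [hfsy] at hsf
      exact hy (by simpa using congrArg List.length hsf)
    have hsnz : M.Nonzero s := nonzero_of_proper_infix_F hfF ⟨[], y, by simp [hfsy]⟩ hsnef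
    have hzsb : M.IsZero (s ++ y) := ⟨f, hfF, hfsy ▸ List.infix_rfl⟩
    have hseq : a = s := suffix_antisymm (h.lmin s hs hsnz hcompsy hzsb) hsa
    rw [hfsy, ← hseq] at hfF; exact hfF

theorem pred_unique {a a' b : List E} (h1 : M.PerfectPair a b) (h2 : M.PerfectPair a' b) :
    a = a' :=
  suffix_antisymm (h1.lmin a' h2.nel h2.nzl h2.comp h2.zero)
    (h2.lmin a h1.nel h1.nzl h1.comp h1.zero)

theorem succ_unique {a b b' : List E} (h1 : M.PerfectPair a b) (h2 : M.PerfectPair a b') :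
    b = b' :=
  prefix_antisymm (h1.rmin b' h2.ner h2.nzr h2.comp h2.zero)
    (h2.rmin b h1.ner h1.nzr h1.comp h1.zero)

/-- Key step: if `q = p ++ u` with `p, q` in perfect pairs `(p,c)`, `(q,d)`, then `c = u ++ d`. -/
theorem succ_of_prefix {p q c d u : List E} (hp : M.PerfectPair p c) (hq : M.PerfectPair q d)
    (hu : u ≠ []) (he : q = p ++ u) : c = u ++ d := by
  have hppc : p ++ c ∈ M.F := hp.append_mem_F
  have hqqd : q ++ d ∈ M.F := hq.append_mem_F
  -- u ++ d is nonzero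
  have hinf : (u ++ d) <:+: q ++ d := ⟨p, [], by simp [he]⟩
  have hne : u ++ d ≠ q ++ d := by
    intro h
    have h1 := congrArg List.length h
    rw [he, List.length_append, List.length_append, List.length_append] at h1
    exact hp.nel (List.length_eq_zero_iff.1 (by omega))
  have h1 : M.Nonzero (u ++ d) := nonzero_of_proper_infix_F hqqd hinf hne
  have hcomp : M.toQuiverData.Composable p (u ++ d) := by
    have h2 := composable_of_path_append (M := M) (he ▸ hq.nzl.1)
    intro x hx y hy
    refine h2 x hx y ?_
    rwa [head?_append_left d hu] at hy
  have hz : M.IsZero (p ++ (u ++ d)) := ⟨q ++ d, hqqd, by rw [he, List.append_assoc]⟩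
  have hpre : c <+: u ++ d :=
    hp.rmin (u ++ d) (by simp [hu]) h1 hcomp hz
  have hncu : ¬ c <+: u := by
    intro hcu
    obtain ⟨t, ht⟩ := hcu
    exact hq.nzl.2 ⟨p ++ c, hppc, ⟨[], t, by simp [he, ← ht]⟩⟩
  have hcu : u <+: c :=
    (prefix_or_prefix_of_prefix ⟨d, rfl⟩ hpre).resolve_right hncu
  obtain ⟨v, hv⟩ := hcu
  have hvne : v ≠ [] := fun h0 => hncu (by rw [← hv, h0, List.append_nil])
  have hvd : v <+: d := by
    obtain ⟨t, ht⟩ := hpre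
    rw [← hv] at ht
    exact ⟨t, List.append_cancel_left (by rw [← List.append_assoc, ht])⟩
  have hvnz : M.Nonzero v := nonzero_infix hq.nzr hvd.isInfix
  have hcqv : M.toQuiverData.Composable q v := by
    have h2 := composable_of_path_append (M := M) ((hv ▸ hp.nzr.1 : M.toQuiverData.IsPath (u ++ v)))
    intro x hx y hy
    refine h2 x ?_ y hy
    rw [he] at hx; rwa [getLast?_append_of_ne_nil _ hu] at hx
  have hzqv : M.IsZero (q ++ v) := ⟨p ++ c, hppc, by rw [he, ← hv]; simp [List.append_assoc]⟩
  have : v = d := prefix_antisymm hvd (hq.rmin v hvne hvnz hcqv hzqv)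
  rw [← hv, this]

/-- Forward law at a suffix configuration. -/
theorem succ_of_suffix {p q c d u : List E} (hp : M.PerfectPair p c) (hq : M.PerfectPair q d)
    (hu : u ≠ []) (he : p = u ++ q) : c <+: d ∧ c ≠ d := by
  have hqqd : q ++ d ∈ M.F := hq.append_mem_F
  have hcomp : M.toQuiverData.Composable p d := by
    intro x hx y hy
    refine hq.comp x ?_ y hy
    rw [he] at hx; rwa [getLast?_append_of_ne_nil _ hq.nel] at hx
  have hz : M.IsZero (p ++ d) := ⟨q ++ d, hqqd, ⟨u, [], by simp [he]⟩⟩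
  have hcd : c <+: d := hp.rmin d hq.ner hq.nzr hcomp hz
  refine ⟨hcd, ?_⟩
  intro hcde
  rw [hcde] at hp
  have : p = q := pred_unique hp hq
  rw [he] at this
  exact hu (by simpa using congrArg List.length this)

end MonomialData

namespace MonomialData
open List PPAux
variable {V E : Type} {M : MonomialData V E}

/-- The glued pair: if `(a,q)`, `(p,c)`, `(q,d)` are perfect pairs and `q = p ++ u`
with `u ≠ []`, then `(a ++ p, u)` is a perfect pair. -/
theorem pair_glue {a p q c d u : List E} (ha : M.PerfectPair a q) (hp : M.PerfectPair p c)
    (hq : M.PerfectPair q d) (hu : u ≠ []) (he : q = p ++ u) :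
    M.PerfectPair (a ++ p) u := by
  have haq : a ++ q ∈ M.F := ha.append_mem_F
  have hpc : p ++ c ∈ M.F := hp.append_mem_F
  have hc : c = u ++ d := succ_of_prefix hp hq hu he
  have hucp : u <+: c := ⟨d, hc.symm⟩
  have hrq : (a ++ p) ++ u = a ++ q := by rw [he, List.append_assoc]
  have hrnef : a ++ p ≠ a ++ q := by
    intro h0
    exact hu (by simpa [he] using List.append_cancel_left h0)
  have hrnz : M.Nonzero (a ++ p) := nonzero_of_proper_infix_F haq
    (by rw [← hrq]; exact ⟨[], u, by simp⟩) hrnef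
  have hunz : M.Nonzero u := nonzero_infix hq.nzl ⟨p, [], by simp [he]⟩
  have haqpath : M.toQuiverData.IsPath (a ++ q) := M.F_path _ haq
  have hcomp : M.toQuiverData.Composable (a ++ p) u :=
    composable_of_path_append (M := M) (by rw [hrq]; exact haqpath)
  have hzero : M.IsZero ((a ++ p) ++ u) := ⟨a ++ q, haq, by rw [hrq]⟩
  refine ⟨by simp [ha.nel], hu, hrnz, hunz, hcomp, hzero, ?_, ?_⟩
  · -- right minimality
    intro q' hq'ne hq'nz hcompq' hzq'
    obtain ⟨f, hfF, hfinf⟩ := hzq'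
    rcases infix_append_split hfinf with hcase | hcase | ⟨s, y, hfsy, hs, hy, hsa, hyb⟩
    · exact absurd ⟨f, hfF, hcase⟩ hrnz.2
    · exact absurd ⟨f, hfF, hcase⟩ hq'nz.2
    · have hfpath : M.toQuiverData.IsPath f := M.F_path _ hfF
      by_cases hsl : s.length ≤ p.length
      · -- s is a suffix of p
        have hsp : s <:+ p := suffix_of_suffix_length_le hsa ⟨a, rfl⟩ hsl
        have hzpq' : M.IsZero (p ++ q') :=
          ⟨f, hfF, hfsy ▸ infix_append_of_suffix_prefix hsp hyb⟩
        have hcpq' : M.toQuiverData.Composable p q' := by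
          intro x hx y' hy'
          refine hcompq' x ?_ y' hy'
          rwa [getLast?_append_of_ne_nil _ hp.nel]
        have := hp.rmin q' hq'ne hq'nz hcpq' hzpq'
        exact hucp.trans this
      · -- s = e ++ p with e a nonempty suffix of a
        have hps : p <:+ s := suffix_of_suffix_length_le ⟨a, rfl⟩ hsa (by omega)
        obtain ⟨e, hes⟩ := hps
        have hene : e ≠ [] := by
          intro h0; rw [h0, List.nil_append] at hes
          rw [← hes] at hsl; omega
        have hea : e <:+ a := by
          obtain ⟨t, ht⟩ := hsa
          rw [← hes, ← List.append_assoc] at ht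
          exact ⟨t, (List.append_inj' ht rfl).1⟩
        have hf2 : f = e ++ (p ++ y) := by rw [hfsy, ← hes, List.append_assoc]
        have hpynef : p ++ y ≠ f := by
          intro h0
          have hlen : (p ++ y).length = e.length + (p ++ y).length := by
            conv_lhs => rw [h0, hf2]
            rw [List.length_append]
          exact hene (List.length_eq_zero_iff.1 (by omega))
        have hpynz : M.Nonzero (p ++ y) :=
          nonzero_of_proper_infix_F hfF ⟨e, [], by simp [hf2]⟩ hpynef
        have hcapy : M.toQuiverData.Composable a (p ++ y) := by
          have h2 := composable_of_path_append (M := M) (hf2 ▸ hfpath)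
          intro x hx y' hy'
          refine h2 x ?_ y' hy'
          obtain ⟨t, ht⟩ := hea
          rw [← ht] at hx; rwa [getLast?_append_of_ne_nil _ hene] at hx
        have hzapy : M.IsZero (a ++ (p ++ y)) :=
          ⟨f, hfF, hf2 ▸ infix_append_of_suffix_prefix hea prefix_rfl⟩
        have hpyne : p ++ y ≠ [] := by simp [hp.nel]
        have hqpy : q <+: p ++ y := ha.rmin (p ++ y) hpyne hpynz hcapy hzapy
        rw [he] at hqpy
        obtain ⟨t, ht⟩ := hqpy
        rw [List.append_assoc] at ht
        have huy : u <+: y := ⟨t, List.append_cancel_left ht⟩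
        exact huy.trans hyb
  · -- left minimality
    intro p' hp'ne hp'nz hcompp' hzp'
    obtain ⟨f, hfF, hfinf⟩ := hzp'
    rcases infix_append_split hfinf with hcase | hcase | ⟨s, y, hfsy, hs, hy, hsa, hyb⟩
    · exact absurd ⟨f, hfF, hcase⟩ hp'nz.2
    · exact absurd ⟨f, hfF, hcase⟩ hunz.2
    · have hfpath : M.toQuiverData.IsPath f := M.F_path _ hfF
      have hyc : y <+: c := hyb.trans hucp
      have hsnef : s ≠ f := by
        intro h0
        have := congrArg List.length h0
        rw [hfsy, List.length_append] at this
        exact hy (List.length_eq_zero_iff.1 (by omega))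
      have hsnz : M.Nonzero s := nonzero_of_proper_infix_F hfF ⟨[], y, by simp [hfsy]⟩ hsnef
      have hcsc : M.toQuiverData.Composable s c := by
        have h2 := composable_of_path_append (M := M) (hfsy ▸ hfpath)
        intro x hx y' hy'
        refine h2 x hx y' ?_
        obtain ⟨w, hw⟩ := hyc
        rw [← hw] at hy'; rwa [head?_append_left w hy] at hy'
      have hzsc : M.IsZero (s ++ c) := by
        obtain ⟨w, hw⟩ := hyc
        exact ⟨f, hfF, ⟨[], w, by simp [hfsy, ← hw]⟩⟩
      have hpss : p <:+ s := hp.lmin s hs hsnz hcsc hzsc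
      obtain ⟨z, hz⟩ := hpss
      by_cases hzne : z = []
      · -- impossible: f = p ++ y would make q zero
        exfalso
        rw [hzne, List.nil_append] at hz
        apply hq.nzl.2
        refine ⟨f, hfF, ?_⟩
        rw [hfsy, ← hz, he]
        exact infix_append_of_suffix_prefix suffix_rfl hyb
      · have hf2 : f = z ++ (p ++ y) := by rw [hfsy, ← hz, List.append_assoc]
        have hznef : z ≠ f := by
          intro h0
          have := congrArg List.length h0
          rw [hf2, List.length_append, List.length_append] at this
          have : p.length = 0 := by omega
          exact hp.nel (List.length_eq_zero_iff.1 this)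
        have hznz : M.Nonzero z := nonzero_of_proper_infix_F hfF ⟨[], p ++ y, by simp [hf2]⟩ hznef
        have hczq : M.toQuiverData.Composable z q := by
          have h2 := composable_of_path_append (M := M) (hf2 ▸ hfpath)
          intro x hx y' hy'
          refine h2 x hx y' ?_
          rw [he] at hy'
          rw [head?_append_left u hp.nel] at hy'
          rwa [head?_append_left y hp.nel]
        have hzzq : M.IsZero (z ++ q) := by
          refine ⟨f, hfF, ?_⟩
          rw [hf2, he]
          obtain ⟨w, hw⟩ := hyb
          exact ⟨[], w, by simp [← hw, List.append_assoc]⟩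
        have haz : a <:+ z := ha.lmin z hzne hznz hczq hzzq
        obtain ⟨w, hw⟩ := haz
        refine List.IsSuffix.trans ?_ hsa
        exact ⟨w, by rw [← hz, ← hw, List.append_assoc]⟩
end MonomialData

namespace MonomialData
open List PPAux
variable {V E : Type}

/-- The opposite monomial algebra. -/
def rev (M : MonomialData V E) : MonomialData V E where
  src := M.tgt
  tgt := M.src
  F := {l | l.reverse ∈ M.F}
  F_path := by
    intro f hf
    have hp := M.F_path f.reverse hf
    have := (List.isChain_reverse (l := f)
      (R := fun a b => M.tgt a = M.src b)).1 ?_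
    · exact this.imp fun a b h => h.symm
    · exact hp
  F_len := by intro f hf; simpa using M.F_len f.reverse hf
  F_min := by
    intro f hf g hg ⟨f', hf', hff⟩
    have := M.F_min f.reverse hf g.reverse
      (by rw [← List.reverse_infix] at hg; simpa using hg)
      ⟨f'.reverse, hf', by rw [← List.reverse_infix] at hff; simpa using hff⟩
    simpa using congrArg List.reverse this
  admissible := by
    obtain ⟨N, hN⟩ := M.admissible
    refine ⟨N, fun l hl hlen => ?_⟩
    have hp : M.toQuiverData.IsPath l.reverse := by
      rw [QuiverData.IsPath, List.Chain', List.isChain_reverse]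
      exact hl.imp fun a b h => h.symm
    obtain ⟨f, hfF, hfi⟩ := hN l.reverse hp (by simpa using hlen)
    refine ⟨f.reverse, by simpa using hfF, ?_⟩
    rw [← List.reverse_infix] at hfi; simpa using hfi

/-- Mirror relation between two monomial algebras. -/
def Mirror (M M' : MonomialData V E) : Prop :=
  (∀ e, M'.src e = M.tgt e) ∧ (∀ e, M'.tgt e = M.src e) ∧ (∀ l, l ∈ M'.F ↔ l.reverse ∈ M.F)

theorem mirror_rev (M : MonomialData V E) : Mirror M M.rev :=
  ⟨fun _ => rfl, fun _ => rfl, fun _ => Iff.rfl⟩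

theorem Mirror.symm {M M' : MonomialData V E} (h : Mirror M M') : Mirror M' M :=
  ⟨fun e => (h.2.1 e).symm, fun e => (h.1 e).symm,
    fun l => by rw [(h.2.2 l.reverse)]; simp⟩

variable {M M' : MonomialData V E}

theorem Mirror.isPath (hm : Mirror M M') {l : List E} (h : M.toQuiverData.IsPath l) :
    M'.toQuiverData.IsPath l.reverse := by
  rw [QuiverData.IsPath, List.Chain', List.isChain_reverse]
  refine h.imp fun a b hab => ?_
  show M'.tgt b = M'.src a
  rw [hm.1, hm.2.1]
  exact hab.symm

theorem Mirror.isZero (hm : Mirror M M') {l : List E} (h : M.IsZero l) :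
    M'.IsZero l.reverse := by
  obtain ⟨f, hf, hfi⟩ := h
  exact ⟨f.reverse, (hm.2.2 f.reverse).2 (by simpa using hf), List.reverse_infix.2 hfi⟩

theorem Mirror.nonzero (hm : Mirror M M') {l : List E} (h : M.Nonzero l) :
    M'.Nonzero l.reverse := by
  refine ⟨hm.isPath h.1, fun hz => h.2 ?_⟩
  have := hm.symm.isZero hz
  simpa using this

theorem Mirror.composable (hm : Mirror M M') {l m : List E}
    (h : M.toQuiverData.Composable l m) :
    M'.toQuiverData.Composable m.reverse l.reverse := by
  intro a ha b hb
  rw [List.getLast?_reverse] at ha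
  rw [List.head?_reverse] at hb
  rw [hm.1, hm.2.1]
  exact (h b hb a ha).symm

theorem Mirror.pair (hm : Mirror M M') {p q : List E} (h : M.PerfectPair p q) :
    M'.PerfectPair q.reverse p.reverse := by
  refine ⟨by simpa using h.ner, by simpa using h.nel, hm.nonzero h.nzr, hm.nonzero h.nzl,
    hm.composable h.comp, ?_, ?_, ?_⟩
  · rw [← List.reverse_append]
    exact hm.isZero h.zero
  · intro q' hq'ne hq'nz hq'comp hq'zero
    have h1 : M.Nonzero q'.reverse := by simpa using hm.symm.nonzero hq'nz
    have h2 : M.toQuiverData.Composable q'.reverse q := by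
      have := hm.symm.composable hq'comp
      simpa using this
    have h3 : M.IsZero (q'.reverse ++ q) := by
      have := hm.symm.isZero hq'zero
      rw [List.reverse_append] at this
      simpa using this
    have h4 := h.lmin q'.reverse (by simpa using hq'ne) h1 h2 h3
    rw [← List.reverse_reverse q']
    exact List.reverse_prefix.2 h4
  · intro p' hp'ne hp'nz hp'comp hp'zero
    have h1 : M.Nonzero p'.reverse := by simpa using hm.symm.nonzero hp'nz
    have h2 : M.toQuiverData.Composable p p'.reverse := by
      have := hm.symm.composable hp'comp
      simpa using this
    have h3 : M.IsZero (p ++ p'.reverse) := by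
      have := hm.symm.isZero hp'zero
      rw [List.reverse_append] at this
      simpa using this
    have h4 := h.rmin p'.reverse (by simpa using hp'ne) h1 h2 h3
    rw [← List.reverse_reverse p']
    exact List.reverse_suffix.2 h4

theorem Mirror.isPerfect (hm : Mirror M M') {p : List E} (h : M.IsPerfect p) :
    M'.IsPerfect p.reverse := by
  obtain ⟨n, s, hn, h0, hper, hpair⟩ := h
  have hmult := PPAux.per_mult hper
  have key : ∀ i : ℕ, s (2*n - (i+1) % n + 1) = s (2*n - i % n) := by
    intro i
    have hmlt : i % n < n := Nat.mod_lt _ hn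
    by_cases hcase : i % n + 1 < n
    · have h1 : (i+1) % n = i % n + 1 := by
        rw [Nat.add_mod, Nat.mod_eq_of_lt (show 1 < n by omega),
          Nat.mod_eq_of_lt hcase]
      rw [h1]
      congr 1
      omega
    · have heq : i % n = n - 1 := by omega
      have h1 : (i + 1) % n = 0 := by
        by_cases hn1 : n = 1
        · subst hn1; simp [Nat.mod_one]
        · rw [Nat.add_mod, Nat.mod_eq_of_lt (show 1 < n by omega), heq,
            show n - 1 + 1 = n by omega, Nat.mod_self]
      rw [h1, heq]
      have e1 : 2*n - 0 + 1 = 1 + 2*n := by omega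
      have e2 : 2*n - (n-1) = 1 + n := by omega
      rw [e1, e2, hmult 2 1, hper 1]
  refine ⟨n, fun i => (s (2*n - i % n)).reverse, hn, ?_, ?_, ?_⟩
  · show (s (2*n - 0 % n)).reverse = p.reverse
    rw [Nat.zero_mod, Nat.sub_zero, show 2*n = 0 + 2*n by omega, hmult 2 0, h0]
  · intro i
    show (s (2*n - (i + n) % n)).reverse = (s (2*n - i % n)).reverse
    rw [Nat.add_mod_right]
  · intro i
    have := hm.pair (hpair (2*n - (i+1) % n))
    rw [key i] at this
    exact this

end MonomialData

namespace MonomialData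
open List PPAux
variable {V E : Type} {M : MonomialData V E}

/-- Mirrored gluing. -/
theorem pair_glue₂ {q₀ q₁ p₀ p₁ p₂ u : List E} (h01 : M.PerfectPair q₀ q₁)
    (h12 : M.PerfectPair p₀ p₁) (h23 : M.PerfectPair p₁ p₂) (hu : u ≠ [])
    (he : p₁ = u ++ q₁) : M.PerfectPair u (q₁ ++ p₂) := by
  have hm := mirror_rev M
  have he' : p₁.reverse = q₁.reverse ++ u.reverse := by rw [he, List.reverse_append]
  have hu' : u.reverse ≠ [] := by simpa using hu
  have hglue := pair_glue (hm.pair h23) (hm.pair h01) (hm.pair h12) hu' he'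
  have := hm.symm.pair hglue
  simpa [List.reverse_append] using this

/-- Main construction: if `p` and `q = p ++ u` are both perfect, then some
`a ++ p` with `a ≠ []` is perfect, and `u` is perfect. -/
theorem main_lemma {p q u : List E} (hp : M.IsPerfect p) (hq : M.IsPerfect q)
    (hu : u ≠ []) (he : q = p ++ u) :
    (∃ a, a ≠ [] ∧ M.IsPerfect (a ++ p)) ∧ M.IsPerfect u := by
  obtain ⟨n₁, P, hn₁, hP0, hPper, hPpair⟩ := hp
  obtain ⟨n₂, Q, hn₂, hQ0, hQper, hQpair⟩ := hq
  set m := n₁ * n₂ with hm0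
  set N := 2 * m with hN0
  have hmpos : 0 < m := Nat.mul_pos hn₁ hn₂
  have hNpos : 0 < N := by omega
  have hPN : ∀ i, P (i + N) = P i := by
    intro i
    have h1 := per_mult hPper (2 * n₂) i
    have e : (2 * n₂) * n₁ = N := by rw [hN0, hm0]; ring
    rw [e] at h1
    exact h1
  have hQN : ∀ i, Q (i + N) = Q i := by
    intro i
    have h1 := per_mult hQper (2 * n₁) i
    have e : (2 * n₁) * n₂ = N := by rw [hN0, hm0]; ring
    rw [e] at h1
    exact h1
  set uf : ℕ → List E := fun k => (Q (2*k)).drop (P (2*k)).length with hufdef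
  have hCh : ∀ k, uf k ≠ [] ∧ Q (2*k) = P (2*k) ++ uf k ∧ P (2*k+1) = uf k ++ Q (2*k+1) := by
    intro k
    induction k with
    | zero =>
      have h1 : Q (2*0) = P (2*0) ++ u := by
        show Q 0 = P 0 ++ u
        rw [hP0, hQ0, he]
      have hufk : uf 0 = u := by
        show (Q (2*0)).drop (P (2*0)).length = u
        rw [h1, List.drop_left]
      refine ⟨hufk ▸ hu, by rw [hufk]; exact h1, ?_⟩
      rw [hufk]
      exact succ_of_prefix (hPpair (2*0)) (hQpair (2*0)) hu h1
    | succ k ih =>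
      obtain ⟨ih1, ih2, ih3⟩ := ih
      have hfwd := succ_of_suffix (hPpair (2*k+1)) (hQpair (2*k+1)) ih1 ih3
      obtain ⟨w, hw⟩ := hfwd.1
      have hwne : w ≠ [] := fun h0 => hfwd.2 (by rw [← hw, h0, List.append_nil])
      have hidx : 2*(k+1) = 2*k+1+1 := by ring
      have h2 : Q (2*(k+1)) = P (2*(k+1)) ++ w := by rw [hidx]; exact hw.symm
      have hufk : uf (k+1) = w := by
        show (Q (2*(k+1))).drop (P (2*(k+1))).length = w
        rw [h2, List.drop_left]
      refine ⟨hufk ▸ hwne, by rw [hufk]; exact h2, ?_⟩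
      rw [hufk]
      exact succ_of_prefix (hPpair (2*(k+1))) (hQpair (2*(k+1))) hwne h2
  have hufper : ∀ k, uf (k + m) = uf k := by
    intro k
    show (Q (2*(k+m))).drop (P (2*(k+m))).length = (Q (2*k)).drop (P (2*k)).length
    rw [show 2*(k+m) = 2*k + N by rw [hN0]; ring, hPN, hQN]
  set r : ℕ → List E := fun j => if Even j then Q (j + N - 1) ++ P j else uf ((j-1)/2)
    with hrdef
  have hreven : ∀ k, r (2*k) = Q (2*k + N - 1) ++ P (2*k) := by
    intro k
    show (if Even (2*k) then _ else _) = _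
    rw [if_pos ⟨k, two_mul k⟩]
  have hrodd : ∀ k, r (2*k+1) = uf k := by
    intro k
    show (if Even (2*k+1) then _ else _) = _
    rw [if_neg (by simp [Nat.even_add_one, Nat.even_mul])]
    congr 1
    omega
  have hrpair : ∀ j, M.PerfectPair (r j) (r (j+1)) := by
    intro j
    rcases Nat.even_or_odd j with ⟨k, hk⟩ | ⟨k, hk⟩
    · have hj : j = 2*k := by omega
      subst hj
      rw [hreven k, hrodd k]
      obtain ⟨hu1, hu2, _⟩ := hCh k
      have hQpred := hQpair (2*k + N - 1)
      rw [show 2*k + N - 1 + 1 = 2*k + N by omega, hQN] at hQpred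
      exact pair_glue hQpred (hPpair (2*k)) (hQpair (2*k)) hu1 hu2
    · have hj : j = 2*k+1 := by omega
      subst hj
      rw [hrodd k]
      have hridx : r (2*k+1+1) = Q (2*k+1) ++ P (2*k+1+1) := by
        rw [show 2*k+1+1 = 2*(k+1) by ring, hreven (k+1),
          show 2*(k+1) + N - 1 = (2*k+1) + N by omega, hQN,
          show 2*(k+1) = 2*k+1+1 by ring]
      rw [hridx]
      obtain ⟨hu1, _, hu3⟩ := hCh k
      exact pair_glue₂ (hQpair (2*k)) (hPpair (2*k)) (hPpair (2*k+1)) hu1 hu3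
  have hrper : ∀ j, r (j + N) = r j := by
    intro j
    rcases Nat.even_or_odd j with ⟨k, hk⟩ | ⟨k, hk⟩
    · have hj : j = 2*k := by omega
      subst hj
      rw [show 2*k + N = 2*(k+m) by rw [hN0]; ring, hreven (k+m), hreven k,
        show 2*(k+m) + N - 1 = (2*k + N - 1) + N by rw [hN0]; omega,
        hQN, show 2*(k+m) = 2*k + N by rw [hN0]; ring, hPN]
    · have hj : j = 2*k+1 := by omega
      subst hj
      rw [show 2*k+1 + N = 2*(k+m)+1 by rw [hN0]; ring, hrodd (k+m), hrodd k, hufper]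
  constructor
  · refine ⟨Q (N - 1), (hQpair (N-1)).nel, ⟨N, r, hNpos, ?_, hrper, hrpair⟩⟩
    have h00 : r 0 = Q (2*0 + N - 1) ++ P (2*0) := hreven 0
    rw [show 2*0 + N - 1 = N - 1 by omega] at h00
    rw [h00]
    show Q (N-1) ++ P 0 = Q (N-1) ++ p
    rw [hP0]
  · refine ⟨N, fun j => r (j + 1), hNpos, ?_, ?_, fun j => hrpair (j+1)⟩
    · show r 1 = u
      have h01 : r 1 = uf 0 := hrodd 0
      rw [h01]
      obtain ⟨_, hu2, _⟩ := hCh 0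
      have h1 : Q 0 = P 0 ++ u := by rw [hP0, hQ0, he]
      have h2 : P (2*0) ++ uf 0 = P (2*0) ++ u := by
        rw [← hu2]; exact h1
      exact List.append_cancel_left h2
    · intro j
      show r (j + N + 1) = r (j + 1)
      rw [show j + N + 1 = (j+1) + N by omega, hrper]
end MonomialData

namespace MonomialData
open List PPAux
variable {V E : Type} {M : MonomialData V E}

theorem IsPerfect.nel {p : List E} (h : M.IsPerfect p) : p ≠ [] := by
  obtain ⟨n, s, hn, h0, _, hpair⟩ := h
  exact h0 ▸ (hpair 0).nel

end MonomialData

theorem elementary_iff_sink_le' {V E : Type} (M : MonomialData V E)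
    (p : List E) (hp : M.IsPerfect p) :
    (M.Elementary p ↔ ¬ ∃ q, M.IsPerfect q ∧ p <:+ q ∧ q ≠ p) ∧
    (M.CoElementary p ↔ ¬ ∃ q, M.IsPerfect q ∧ q <:+ p ∧ q ≠ p) := by
  open List PPAux MonomialData in
  constructor
  · constructor
    · rintro ⟨-, hnE⟩ ⟨q, hq, hsuf, hne⟩
      obtain ⟨v, hv⟩ := hsuf
      have hvne : v ≠ [] := by rintro rfl; exact hne (by simpa using hv.symm)
      have hm := mirror_rev M
      have he' : q.reverse = p.reverse ++ v.reverse := by rw [← hv, List.reverse_append]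
      obtain ⟨⟨a, hane, haperf⟩, -⟩ :=
        main_lemma (u := v.reverse) (hm.isPerfect hp) (hm.isPerfect hq)
          (by simpa using hvne) he'
      have hperf := hm.symm.isPerfect haperf
      rw [List.reverse_append, List.reverse_reverse] at hperf
      exact hnE ⟨p ++ a.reverse, hperf, ⟨a.reverse, rfl⟩,
        ne_of_prefix_proper rfl (by simpa using hane)⟩
    · intro hnS
      refine ⟨hp, ?_⟩
      rintro ⟨q, hq, hpre, hne⟩
      obtain ⟨u, hu⟩ := hpre
      have hune : u ≠ [] := by rintro rfl; exact hne (by simpa using hu)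
      obtain ⟨⟨a, hane, haperf⟩, -⟩ := main_lemma hp hq hune hu.symm
      exact hnS ⟨a ++ p, haperf, ⟨a, rfl⟩, (ne_of_suffix_proper rfl hane).symm⟩
  · constructor
    · rintro ⟨-, hnC⟩ ⟨w, hw, hsuf, hne⟩
      obtain ⟨v, hv⟩ := hsuf
      have hvne : v ≠ [] := by rintro rfl; exact hne (by simpa using hv)
      have hm := mirror_rev M
      obtain ⟨-, huperf⟩ := main_lemma (u := v.reverse) (hm.isPerfect hw) (hm.isPerfect hp)
        (by simpa using hvne) (by rw [← hv, List.reverse_append])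
      have hv2 := hm.symm.isPerfect huperf
      rw [List.reverse_reverse] at hv2
      exact hnC ⟨v, hv2, ⟨w, hv⟩, ne_of_prefix_proper hv.symm hw.nel⟩
    · intro hnS
      refine ⟨hp, ?_⟩
      rintro ⟨x, hx, hpre, hne⟩
      obtain ⟨u, hu⟩ := hpre
      have hune : u ≠ [] := by rintro rfl; exact hne (by simpa using hu)
      obtain ⟨-, huperf⟩ := main_lemma hx hp hune hu.symm
      exact hnS ⟨u, huperf, ⟨x, hu⟩, ne_of_suffix_proper hu.symm hx.nel⟩


/-- a perfect path `p` is elementary iff it is a sink for the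
order `≤` (no perfect `q` with `q < p`, i.e. no perfect path has `p` as a
proper right divisor), and co-elementary iff it is a source for `≤`
(no perfect `q` with `p < q`, i.e. no proper right divisor of `p` is perfect). -/
theorem elementary_iff_sink_le {V E : Type} (M : MonomialData V E)
    (p : List E) (hp : M.IsPerfect p) :
    (M.Elementary p ↔ ¬ ∃ q, M.IsPerfect q ∧ p <:+ q ∧ q ≠ p) ∧
    (M.CoElementary p ↔ ¬ ∃ q, M.IsPerfect q ∧ q <:+ p ∧ q ≠ p) := by
  exact elementary_iff_sink_le' M p hp
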